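/- arXiv:1901.10158 — 3 statements merged into one kernel-verified Lean document; each statement's English description precedes it below -/
import Mathlib

section
/- For every ε > 0 and all real numbers r and s, one has r·(Ln_ε(r) − Ln_ε(s)) ≥ (ε/2)(r² − s²) + (ε/2)(r − s)² + (ε/2)(ln_ε(r)² − ln_ε(s)²) + (ε/2)(ln_ε(r) − ln_ε(s))² + ρ_ε(r) − ρ_ε(s). -/
/-- The pointwise inequality underlying the discrete entropy estimate: with
`ρ_ε r` the unique positive solution of `ρ + ε * log ρ = r`,
`ln_ε r = log (ρ_ε r)` and `Ln_ε r = ε * r + ln_ε r`, one has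
`r * (Ln_ε r - Ln_ε s) ≥ (ε/2)(r² - s²) + (ε/2)(r - s)² + (ε/2)(ln_ε r² - ln_ε s²)
  + (ε/2)(ln_ε r - ln_ε s)² + ρ_ε r - ρ_ε s`. -/
theorem entropy_pointwise_ineq (ε : ℝ) (hε : 0 < ε) (ρ : ℝ → ℝ)
    (hρ : ∀ r : ℝ, 0 < ρ r ∧ ρ r + ε * Real.log (ρ r) = r) (r s : ℝ) :
    r * ((ε * r + Real.log (ρ r)) - (ε * s + Real.log (ρ s))) ≥
      ε / 2 * (r ^ 2 - s ^ 2) + ε / 2 * (r - s) ^ 2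
        + ε / 2 * ((Real.log (ρ r)) ^ 2 - (Real.log (ρ s)) ^ 2)
        + ε / 2 * (Real.log (ρ r) - Real.log (ρ s)) ^ 2
        + ρ r - ρ s := by
  obtain ⟨hr, hr'⟩ := hρ r
  obtain ⟨hs, hs'⟩ := hρ s
  set a := Real.log (ρ r) with ha
  set b := Real.log (ρ s) with hb
  have h1 : ρ r * (a - b) ≥ ρ r - ρ s := by
    have h := Real.add_one_le_exp (b - a)
    have ea : Real.exp a = ρ r := Real.exp_log hr
    have eb : Real.exp b = ρ s := Real.exp_log hs
    have hm : Real.exp (b - a) * Real.exp a = Real.exp b := by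
      rw [← Real.exp_add]; ring_nf
    nlinarith [mul_le_mul_of_nonneg_right h (Real.exp_pos a).le]
  nlinarith [sq_nonneg (r - s), sq_nonneg (a - b), hε.le]
end

section
/- Let β̂ : ℝ → ℝ ∪ {+∞} be a proper, convex, lower semicontinuous function with β̂(r) ≥ 0 for all r, β̂(0) = 0, and β̂(r)/r² → +∞ as |r| → +∞. Then for every γ > 0 there exist ε₁ ∈ (0, 1] and a constant C > 0 such that β̂_ε(r) ≥ γ r² − C for all r ∈ ℝ and all ε ∈ (0, ε₁). -/
open scoped ENNReal

/-- The Moreau–Yosida regularization (as an `ℝ≥0∞`-valued infimum) of a proper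
convex l.s.c. function `β̂ : ℝ → [0, +∞]`. -/
noncomputable def moreauEnv (bhat : ℝ → ℝ≥0∞) (ε : ℝ) (r : ℝ) : ℝ≥0∞ :=
  ⨅ s : ℝ, ENNReal.ofReal ((r - s) ^ 2 / (2 * ε)) + bhat s

/-- For `β̂ : ℝ → [0, +∞]` proper, convex, lower semicontinuous with `β̂(0) = 0`
and `β̂(r)/r² → +∞` as `|r| → +∞`: for every `γ > 0` there exist `ε₁ ∈ (0,1]`
and `C > 0` such that `β̂_ε(r) ≥ γ r² - C` for all `r ∈ ℝ` and all `ε ∈ (0, ε₁)`. -/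
theorem moreauEnv_superquadratic (bhat : ℝ → ℝ≥0∞)
    (hproper : ∃ s : ℝ, bhat s ≠ ⊤)
    (hconv : ∀ a b t : ℝ, 0 ≤ t → t ≤ 1 →
      bhat (t * a + (1 - t) * b) ≤
        ENNReal.ofReal t * bhat a + ENNReal.ofReal (1 - t) * bhat b)
    (hlsc : LowerSemicontinuous bhat)
    (hzero : bhat 0 = 0)
    (hgrowth : ∀ K : ℝ, ∃ R : ℝ, ∀ r : ℝ, R ≤ |r| → ENNReal.ofReal (K * r ^ 2) ≤ bhat r)
    (γ : ℝ) (hγ : 0 < γ) :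
    ∃ ε₁ ∈ Set.Ioc (0 : ℝ) 1, ∃ C : ℝ, 0 < C ∧
      ∀ r : ℝ, ∀ ε : ℝ, 0 < ε → ε < ε₁ →
        γ * r ^ 2 - C ≤ (moreauEnv bhat ε r).toReal := by
  obtain ⟨R, hR⟩ := hgrowth (2 * γ)
  refine ⟨min 1 (1 / (4 * γ)), ⟨lt_min one_pos (by positivity), min_le_left _ _⟩,
    2 * γ * R ^ 2 + 1, by positivity, ?_⟩
  intro r ε hε hεlt
  set C : ℝ := 2 * γ * R ^ 2 + 1 with hC
  have hε4 : ε < 1 / (4 * γ) := lt_of_lt_of_le hεlt (min_le_right _ _)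
  -- key: 1/(2ε) ≥ 2γ, i.e. 4γε ≤ 1
  have hkey : 4 * γ * ε ≤ 1 := by
    rw [div_eq_mul_inv, one_mul] at hε4
    calc 4 * γ * ε ≤ 4 * γ * (4 * γ)⁻¹ := by
          apply mul_le_mul_of_nonneg_left hε4.le (by positivity)
      _ = 1 := by field_simp
  -- for each s, the term is at least ofReal (γ r² - C)
  have hterm : ∀ s : ℝ, ENNReal.ofReal (γ * r ^ 2 - C) ≤
      ENNReal.ofReal ((r - s) ^ 2 / (2 * ε)) + bhat s := by
    intro s
    have hquad : 2 * γ * (r - s) ^ 2 ≤ (r - s) ^ 2 / (2 * ε) := by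
      rw [le_div_iff₀ (by positivity)]
      nlinarith [sq_nonneg (r - s)]
    rcases le_or_gt R |s| with hs | hs
    · -- large s: use growth
      have h1 : ENNReal.ofReal (2 * γ * s ^ 2) ≤ bhat s := hR s hs
      calc ENNReal.ofReal (γ * r ^ 2 - C)
          ≤ ENNReal.ofReal ((r - s) ^ 2 / (2 * ε) + 2 * γ * s ^ 2) := by
            apply ENNReal.ofReal_le_ofReal
            nlinarith [sq_nonneg (r - 2 * s), sq_nonneg R]
        _ ≤ ENNReal.ofReal ((r - s) ^ 2 / (2 * ε)) + ENNReal.ofReal (2 * γ * s ^ 2) :=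
            ENNReal.ofReal_add_le
        _ ≤ _ := add_le_add_right h1 _
    · -- small s
      have hs2 : s ^ 2 ≤ R ^ 2 := by
        nlinarith [sq_abs s, abs_nonneg s]
      calc ENNReal.ofReal (γ * r ^ 2 - C)
          ≤ ENNReal.ofReal ((r - s) ^ 2 / (2 * ε)) := by
            apply ENNReal.ofReal_le_ofReal
            nlinarith [sq_nonneg (r - 2 * s)]
        _ ≤ _ := le_add_right le_rfl
  have hlow : ENNReal.ofReal (γ * r ^ 2 - C) ≤ moreauEnv bhat ε r := le_iInf hterm
  have hfin : moreauEnv bhat ε r ≠ ⊤ := by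
    have h0 : moreauEnv bhat ε r ≤ ENNReal.ofReal ((r - 0) ^ 2 / (2 * ε)) + bhat 0 :=
      iInf_le _ 0
    rw [hzero, add_zero] at h0
    exact ne_top_of_le_ne_top ENNReal.ofReal_ne_top h0
  have := ENNReal.toReal_mono hfin hlow
  rcases le_or_gt 0 (γ * r ^ 2 - C) with h | h
  · rwa [ENNReal.toReal_ofReal h] at this
  · exact h.le.trans ENNReal.toReal_nonneg
end

section
/- Let β̂ : ℝ → ℝ ∪ {+∞} be a proper, convex, lower semicontinuous function with β̂(r) ≥ 0 for all r and β̂(0) = 0, and let m₀ ∈ ℝ and δ > 0 be such that β̂(m₀ − δ) < +∞ and β̂(m₀ + δ) < +∞. Then there exist constants c > 0 and d > 0 such that β_ε(r)·(r − m₀) ≥ c·|β_ε(r)| − d for all r ∈ ℝ and all ε ∈ (0, 1]. -/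
open scoped ENNReal

/-- For `β̂ : ℝ → [0, +∞]` proper, convex, lower semicontinuous with `β̂(0) = 0`,
and `m₀ ∈ ℝ`, `δ > 0` with `β̂(m₀ - δ) < +∞` and `β̂(m₀ + δ) < +∞`: there exist
`c > 0` and `d > 0` such that `β_ε(r) * (r - m₀) ≥ c * |β_ε(r)| - d` for all
`r ∈ ℝ` and all `ε ∈ (0, 1]`, where `β_ε(r) = (r - J_ε(r))/ε` is the Yosida
approximation built from the resolvent `J_ε`. -/
theorem yosida_coercive_interior (bhat : ℝ → ℝ≥0∞)
    (hproper : ∃ s : ℝ, bhat s ≠ ⊤)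
    (hconv : ∀ a b t : ℝ, 0 ≤ t → t ≤ 1 →
      bhat (t * a + (1 - t) * b) ≤
        ENNReal.ofReal t * bhat a + ENNReal.ofReal (1 - t) * bhat b)
    (hlsc : LowerSemicontinuous bhat)
    (hzero : bhat 0 = 0)
    (m₀ δ : ℝ) (hδ : 0 < δ)
    (hfin₁ : bhat (m₀ - δ) ≠ ⊤) (hfin₂ : bhat (m₀ + δ) ≠ ⊤)
    (J : ℝ → ℝ → ℝ)
    (hJ : ∀ ε ∈ Set.Ioc (0 : ℝ) 1, ∀ r s : ℝ,
      ENNReal.ofReal ((r - J ε r) ^ 2 / (2 * ε)) + bhat (J ε r) ≤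
        ENNReal.ofReal ((r - s) ^ 2 / (2 * ε)) + bhat s) :
    ∃ c : ℝ, 0 < c ∧ ∃ d : ℝ, 0 < d ∧
      ∀ ε ∈ Set.Ioc (0 : ℝ) 1, ∀ r : ℝ,
        ((r - J ε r) / ε) * (r - m₀) ≥ c * |(r - J ε r) / ε| - d := by
  set B₁ := (bhat (m₀ - δ)).toReal with hB₁
  set B₂ := (bhat (m₀ + δ)).toReal with hB₂
  have hB₁0 : 0 ≤ B₁ := ENNReal.toReal_nonneg
  have hB₂0 : 0 ≤ B₂ := ENNReal.toReal_nonneg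
  refine ⟨δ, hδ, max B₁ B₂ + 1, by positivity, ?_⟩
  intro ε hε r
  obtain ⟨hε0, hε1⟩ := hε
  set j := J ε r with hjdef
  -- finiteness of bhat j
  have hjfin : bhat j ≠ ⊤ := by
    have h := hJ ε ⟨hε0, hε1⟩ r 0
    rw [hzero, add_zero] at h
    intro htop
    rw [htop] at h
    simp at h
  set A := (bhat j).toReal with hAdef
  have hA0 : 0 ≤ A := ENNReal.toReal_nonneg
  -- subgradient inequality
  have sub : ∀ s : ℝ, bhat s ≠ ⊤ → ((r - j) / ε) * (s - j) ≤ (bhat s).toReal := by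
    intro s hs
    set Bs := (bhat s).toReal with hBsdef
    have hBs0 : 0 ≤ Bs := ENNReal.toReal_nonneg
    have key : ∀ t ∈ Set.Ioc (0 : ℝ) 1,
        2 * (r - j) * (s - j) ≤ 2 * ε * Bs + t * (s - j) ^ 2 := by
      rintro t ⟨ht0, ht1⟩
      have hcv := hconv s j t ht0.le ht1
      have hmin := hJ ε ⟨hε0, hε1⟩ r (t * s + (1 - t) * j)
      have hcomb : ENNReal.ofReal ((r - j) ^ 2 / (2 * ε)) + bhat j ≤
          ENNReal.ofReal ((r - (t * s + (1 - t) * j)) ^ 2 / (2 * ε)) +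
            (ENNReal.ofReal t * bhat s + ENNReal.ofReal (1 - t) * bhat j) :=
        hmin.trans (add_le_add_right hcv _)
      rw [(ENNReal.ofReal_toReal hjfin).symm, (ENNReal.ofReal_toReal hs).symm] at hcomb
      have ht0' : (0:ℝ) ≤ 1 - t := by linarith
      have hn1 : 0 ≤ t * Bs := mul_nonneg ht0.le hBs0
      have hn2 : 0 ≤ (1 - t) * A := mul_nonneg ht0' hA0
      rw [← ENNReal.ofReal_mul ht0.le, ← ENNReal.ofReal_mul ht0',
        ← ENNReal.ofReal_add hn1 hn2,
        ← ENNReal.ofReal_add (by positivity) (add_nonneg hn1 hn2),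
        ← ENNReal.ofReal_add (by positivity) hA0] at hcomb
      have hreal := (ENNReal.ofReal_le_ofReal_iff
        (add_nonneg (by positivity) (add_nonneg hn1 hn2))).mp hcomb
      have h2ε : (0:ℝ) < 2 * ε := by linarith
      have h' : (r - j) ^ 2 + 2 * ε * A ≤
          (r - j - t * (s - j)) ^ 2 + 2 * ε * (t * Bs + (1 - t) * A) := by
        have := mul_le_mul_of_nonneg_left hreal h2ε.le
        rw [mul_add, mul_add, mul_div_cancel₀ _ h2ε.ne', mul_div_cancel₀ _ h2ε.ne'] at this
        nlinarith [this]
      have h'' : t * (2 * (r - j) * (s - j)) ≤ t * (2 * ε * Bs + t * (s - j) ^ 2) := by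
        nlinarith [h', mul_nonneg (mul_nonneg h2ε.le ht0.le) hA0]
      exact le_of_mul_le_mul_left h'' ht0
    have lim : Filter.Tendsto (fun t : ℝ => 2 * ε * Bs + t * (s - j) ^ 2)
        (nhdsWithin 0 (Set.Ioi (0:ℝ))) (nhds (2 * ε * Bs)) := by
      have : Filter.Tendsto (fun t : ℝ => 2 * ε * Bs + t * (s - j) ^ 2)
          (nhds 0) (nhds (2 * ε * Bs + 0 * (s - j) ^ 2)) := by
        exact (Continuous.tendsto (by continuity) 0)
      simpa using this.mono_left nhdsWithin_le_nhds
    have h2 : 2 * (r - j) * (s - j) ≤ 2 * ε * Bs := by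
      refine ge_of_tendsto lim ?_
      filter_upwards [Ioc_mem_nhdsGT_of_mem ⟨le_refl (0:ℝ), zero_lt_one⟩] with t ht
      exact key t ht
    rw [div_mul_eq_mul_div, div_le_iff₀ hε0]
    nlinarith [h2]
  -- conclude
  set b := (r - j) / ε with hbdef
  have hb1 : 0 ≤ b * (r - j) := by
    rw [hbdef, div_mul_eq_mul_div]
    exact div_nonneg (mul_self_nonneg _) hε0.le
  rcases le_or_gt 0 b with hb | hb
  · have hsub := sub (m₀ + δ) hfin₂
    rw [abs_of_nonneg hb]
    have hle : B₂ ≤ max B₁ B₂ := le_max_right _ _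
    nlinarith [hsub, hb1, mul_nonneg hb hδ.le]
  · have hsub := sub (m₀ - δ) hfin₁
    rw [abs_of_neg hb]
    have hle : B₁ ≤ max B₁ B₂ := le_max_left _ _
    nlinarith [hsub, hb1]
end
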